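/- arXiv:2006.16909 — 3 statements merged into one kernel-verified Lean document; each statement's English description precedes it below -/
import Mathlib

section
/- If (G,σ) is a best match graph, then (G,σ) contains no induced F1-graph. -/
/-- A rooted (phylogenetic) tree on leaf set `V`, encoded by its hierarchy of
clusters `L(T(v))`, `v ∈ V(T)`: a rooted tree on leaf set `V` corresponds
exactly to a family of nonempty, pairwise compatible subsets of `V` containing
all singletons and `V` itself.  Together with a coloring `σ : V → M` this is a
leaf-colored tree. -/
structure PhyloTree (V : Type) where
  clusters : Set (Set V)
  compat : ∀ p ∈ clusters, ∀ q ∈ clusters, p ⊆ q ∨ q ⊆ p ∨ p ∩ q = ∅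
  singleton_mem : ∀ v : V, {v} ∈ clusters
  univ_mem : Set.univ ∈ clusters
  nonempty_mem : ∀ p ∈ clusters, p.Nonempty

namespace PhyloTree

variable {V M : Type}

/-- The cluster `L(T(lca(x,y)))` of the last common ancestor of `x` and `y`;
for inner vertices `u,v` of a tree one has `u ⪯_T v ↔ L(T(u)) ⊆ L(T(v))`. -/
def lcaSet (T : PhyloTree V) (x y : V) : Set V :=
  ⋂₀ {p : Set V | p ∈ T.clusters ∧ x ∈ p ∧ y ∈ p}

/-- `T` displays the triple `xy|z`, i.e. `lca(x,y) ≺ lca(x,z) = lca(y,z)`. -/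
def Displays (T : PhyloTree V) (x y z : V) : Prop :=
  T.lcaSet x y ⊂ T.lcaSet x z ∧ T.lcaSet x z = T.lcaSet y z

/-- `y` is a best match of `x` in the leaf-colored tree `(T,σ)`. -/
def BestMatch (T : PhyloTree V) (σ : V → M) (x y : V) : Prop :=
  σ x ≠ σ y ∧ ∀ y' : V, σ y' = σ y → T.lcaSet x y ⊆ T.lcaSet x y'

end PhyloTree

variable {V M : Type}

/-- `(T,σ)` explains `(G,σ)`, i.e. `(G,σ) = G(T,σ)`. -/
def Explains (T : PhyloTree V) (σ : V → M) (G : V → V → Prop) : Prop :=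
  ∀ x y : V, G x y ↔ T.BestMatch σ x y

/-- `(G,σ)` is a best match graph. -/
def IsBMG (G : V → V → Prop) (σ : V → M) : Prop :=
  ∃ T : PhyloTree V, Explains T σ G

/-- The triple `xy|y'` is informative for `(G,σ)`. -/
def InformativeTriple (G : V → V → Prop) (σ : V → M) (x y y' : V) : Prop :=
  x ≠ y ∧ x ≠ y' ∧ y ≠ y' ∧ σ x ≠ σ y ∧ σ y = σ y' ∧ G x y ∧ ¬ G x y'

/-- The triple `xy|y'` is forbidden for `(G,σ)`. -/
def ForbiddenTriple (G : V → V → Prop) (σ : V → M) (x y y' : V) : Prop :=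
  x ≠ y ∧ x ≠ y' ∧ y ≠ y' ∧ σ x ≠ σ y ∧ σ y = σ y' ∧ G x y ∧ G x y'

/-- `(G,σ)` is sf-colored: `σ` is proper and every vertex has an out-neighbor
of every color present in the graph other than its own. -/
def SfColored (G : V → V → Prop) (σ : V → M) : Prop :=
  (∀ x y : V, G x y → σ x ≠ σ y) ∧
  ∀ (x : V) (s : M), (∃ v : V, σ v = s) → s ≠ σ x → ∃ y : V, σ y = s ∧ G x y

/-- `(G,σ)` contains an induced F1-graph. -/
def HasF1 (G : V → V → Prop) (σ : V → M) : Prop :=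
  ∃ x1 x2 y1 y2 : V,
    x1 ≠ x2 ∧ y1 ≠ y2 ∧
    σ x1 = σ x2 ∧ σ y1 = σ y2 ∧ σ x1 ≠ σ y1 ∧
    ¬ G x1 x2 ∧ ¬ G x2 x1 ∧ ¬ G y1 y2 ∧ ¬ G y2 y1 ∧
    G x1 y1 ∧ G y2 x2 ∧ G y1 x2 ∧ ¬ G x1 y2 ∧ ¬ G y2 x1

/-- `(G,σ)` contains an induced F2-graph. -/
def HasF2 (G : V → V → Prop) (σ : V → M) : Prop :=
  ∃ x1 x2 y1 y2 : V,
    x1 ≠ x2 ∧ y1 ≠ y2 ∧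
    σ x1 = σ x2 ∧ σ y1 = σ y2 ∧ σ x1 ≠ σ y1 ∧
    ¬ G x1 x2 ∧ ¬ G x2 x1 ∧ ¬ G y1 y2 ∧ ¬ G y2 y1 ∧
    G x1 y1 ∧ G y1 x2 ∧ G x2 y2 ∧ ¬ G x1 y2

/-- `(G,σ)` contains an induced F3-graph. -/
def HasF3 (G : V → V → Prop) (σ : V → M) : Prop :=
  ∃ x1 x2 y1 y2 y3 : V,
    x1 ≠ x2 ∧ y1 ≠ y2 ∧ y1 ≠ y3 ∧ y2 ≠ y3 ∧
    σ x1 = σ x2 ∧ σ y1 = σ y2 ∧ σ y2 = σ y3 ∧ σ x1 ≠ σ y1 ∧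
    ¬ G x1 x2 ∧ ¬ G x2 x1 ∧ ¬ G y1 y2 ∧ ¬ G y2 y1 ∧
    ¬ G y1 y3 ∧ ¬ G y3 y1 ∧ ¬ G y2 y3 ∧ ¬ G y3 y2 ∧
    G x1 y1 ∧ G x2 y2 ∧ G x1 y3 ∧ G x2 y3 ∧ ¬ G x1 y2 ∧ ¬ G x2 y1

lemma lca_mem_left (T : PhyloTree V) (x y : V) : x ∈ T.lcaSet x y :=
  Set.mem_sInter.2 fun _ hp => hp.2.1

lemma lca_mem_right (T : PhyloTree V) (x y : V) : y ∈ T.lcaSet x y :=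
  Set.mem_sInter.2 fun _ hp => hp.2.2

lemma lca_symm (T : PhyloTree V) (x y : V) : T.lcaSet x y = T.lcaSet y x := by
  unfold PhyloTree.lcaSet
  have : {p : Set V | p ∈ T.clusters ∧ x ∈ p ∧ y ∈ p}
      = {p | p ∈ T.clusters ∧ y ∈ p ∧ x ∈ p} := by ext p; simp only [Set.mem_setOf_eq]; tauto
  rw [this]

lemma lca_subset {T : PhyloTree V} {x y : V} {q : Set V} (hq : q ∈ T.clusters)
    (hx : x ∈ q) (hy : y ∈ q) : T.lcaSet x y ⊆ q :=
  Set.sInter_subset_of_mem ⟨hq, hx, hy⟩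

lemma lca_cluster [Fintype V] (T : PhyloTree V) (x y : V) :
    T.lcaSet x y ∈ T.clusters := by
  classical
  set S : Set (Set V) := {p | p ∈ T.clusters ∧ x ∈ p ∧ y ∈ p} with hS
  have hfin : S.Finite := Set.toFinite S
  have hne : S.Nonempty := ⟨Set.univ, T.univ_mem, trivial, trivial⟩
  obtain ⟨m, hm, hmin⟩ := hfin.exists_minimal hne
  have hleast : ∀ p ∈ S, m ⊆ p := by
    intro p hp
    rcases T.compat m hm.1 p hp.1 with h1 | h1 | h1
    · exact h1
    · exact hmin hp h1
    · exact absurd (Set.mem_inter hm.2.1 hp.2.1) (by rw [h1]; exact not_false)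
  have heq : T.lcaSet x y = m :=
    subset_antisymm (Set.sInter_subset_of_mem hm) (Set.subset_sInter hleast)
  rw [heq]
  exact hm.1

/-- A BMG contains no induced F1-graph. -/
theorem bmg_no_F1 [Fintype V] (G : V → V → Prop) (σ : V → M)
    (h : IsBMG G σ) : ¬ HasF1 G σ := by
  rintro ⟨x1, x2, y1, y2, hx12, hy12, hsx, hsy, hsxy, -, -, -, -,
    gx1y1, gy2x2, gy1x2, ngx1y2, ngy2x1⟩
  obtain ⟨T, hT⟩ := h
  have bm1 := (hT x1 y1).1 gx1y1
  have bm2 := (hT y2 x2).1 gy2x2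
  have bm3 := (hT y1 x2).1 gy1x2
  -- y2 ∉ lca(x1, y1)
  have hy2A : y2 ∉ T.lcaSet x1 y1 := by
    intro hmem
    apply ngx1y2
    refine (hT x1 y2).2 ⟨fun e => hsxy (e.trans hsy.symm), fun y' hy' => ?_⟩
    exact (lca_subset (lca_cluster T x1 y1) (lca_mem_left T x1 y1) hmem).trans
      (bm1.2 y' (hy'.trans hsy.symm))
  -- x1 ∉ lca(y2, x2)
  have hx1C : x1 ∉ T.lcaSet y2 x2 := by
    intro hmem
    apply ngy2x1
    refine (hT y2 x1).2 ⟨fun e => hsxy (e.symm.trans hsy.symm),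
      fun x' hx' => ?_⟩
    exact (lca_subset (lca_cluster T y2 x2) (lca_mem_left T y2 x2) hmem).trans
      (bm2.2 x' (hx'.trans hsx))
  -- x2 ∈ lca(x1, y1)
  have hx2A : x2 ∈ T.lcaSet x1 y1 := by
    have hsub : T.lcaSet y1 x2 ⊆ T.lcaSet y1 x1 := bm3.2 x1 hsx
    have := hsub (lca_mem_right T y1 x2)
    rwa [lca_symm] at this
  rcases T.compat (T.lcaSet x1 y1) (lca_cluster T x1 y1)
      (T.lcaSet y2 x2) (lca_cluster T y2 x2) with h1 | h1 | h1
  · exact hx1C (h1 (lca_mem_left T x1 y1))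
  · exact hy2A (h1 (lca_mem_left T y2 x2))
  · exact absurd (Set.mem_inter hx2A (lca_mem_right T y2 x2))
      (by rw [h1]; exact not_false)
end

section
/- If (G,σ) is a best match graph, then (G,σ) contains no induced F3-graph. -/
variable {V M : Type}

namespace PhyloTree

lemma lcaSet_spec {V : Type} [Fintype V] (T : PhyloTree V) (x y : V) :
    T.lcaSet x y ∈ T.clusters ∧ x ∈ T.lcaSet x y ∧ y ∈ T.lcaSet x y := by
  classical
  set S : Set (Set V) := {p | p ∈ T.clusters ∧ x ∈ p ∧ y ∈ p} with hSdef
  have hne : S.Nonempty := ⟨Set.univ, T.univ_mem, trivial, trivial⟩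
  obtain ⟨m, hmS, hmin⟩ := (Set.toFinite S).exists_minimal hne
  have hmin' : ∀ p ∈ S, m ⊆ p := by
    intro p hp
    rcases T.compat m hmS.1 p hp.1 with h1 | h1 | h1
    · exact h1
    · exact hmin hp h1
    · exact absurd (Set.mem_inter hmS.2.1 hp.2.1) (by simp [h1])
  have heq : T.lcaSet x y = m :=
    subset_antisymm (Set.sInter_subset_of_mem hmS) (Set.subset_sInter hmin')
  rw [heq]
  exact ⟨hmS.1, hmS.2⟩

end PhyloTree

theorem bmg_no_F3' {V M : Type} [Fintype V] (G : V → V → Prop) (σ : V → M)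
    (h : IsBMG G σ) : ¬ HasF3 G σ := by
  obtain ⟨T, hT⟩ := h
  rintro ⟨x1, x2, y1, y2, y3, hx12, hy12, hy13, hy23, hσx, hσ12, hσ23, hσxy,
    -, -, -, -, -, -, -, -, g11, g22, g13, g23, n12, n21⟩
  have b11 := (hT x1 y1).1 g11
  have b22 := (hT x2 y2).1 g22
  have b13 := (hT x1 y3).1 g13
  have b23 := (hT x2 y3).1 g23
  have hσ13 : σ y1 = σ y3 := hσ12.trans hσ23
  -- A1 = lca(x1,y1) = lca(x1,y3)
  have hA1 : T.lcaSet x1 y1 = T.lcaSet x1 y3 :=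
    subset_antisymm (b11.2 y3 hσ13.symm) (b13.2 y1 hσ13)
  have hA2 : T.lcaSet x2 y2 = T.lcaSet x2 y3 :=
    subset_antisymm (b22.2 y3 hσ23.symm) (b23.2 y2 hσ23)
  obtain ⟨c1, m11, m1y⟩ := T.lcaSet_spec x1 y1
  obtain ⟨c2, m22, m2y⟩ := T.lcaSet_spec x2 y2
  have hy3A1 : y3 ∈ T.lcaSet x1 y1 := by
    rw [hA1]; exact (T.lcaSet_spec x1 y3).2.2
  have hy3A2 : y3 ∈ T.lcaSet x2 y2 := by
    rw [hA2]; exact (T.lcaSet_spec x2 y3).2.2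
  rcases T.compat _ c1 _ c2 with hsub | hsub | hdisj
  · -- A1 ⊆ A2 : y1 is a best match of x2
    apply n21
    rw [hT]
    refine ⟨by rw [← hσx]; exact hσxy, fun z hz => ?_⟩
    have h1 : T.lcaSet x2 y1 ⊆ T.lcaSet x2 y2 :=
      Set.sInter_subset_of_mem ⟨c2, m22, hsub m1y⟩
    exact h1.trans (b22.2 z (hz.trans hσ12))
  · -- A2 ⊆ A1 : y2 is a best match of x1
    apply n12
    rw [hT]
    refine ⟨fun e => hσxy (e.trans hσ12.symm), fun z hz => ?_⟩
    have h1 : T.lcaSet x1 y2 ⊆ T.lcaSet x1 y1 :=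
      Set.sInter_subset_of_mem ⟨c1, m11, hsub m2y⟩
    exact h1.trans (b11.2 z (hz.trans hσ12.symm))
  · exact absurd (Set.mem_inter hy3A1 hy3A2) (by simp [hdisj])

/-- A BMG contains no induced F3-graph. -/
theorem bmg_no_F3 [Fintype V] (G : V → V → Prop) (σ : V → M)
    (h : IsBMG G σ) : ¬ HasF3 G σ := by
  exact bmg_no_F3' G σ h
end

section
/- A properly 2-colored digraph (G,σ) is a best match graph if and only if it is sink-free and does not contain an induced F1-, F2-, or F3-graph. -/
variable {V M : Type}

section AuxBMG

variable {V : Type}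

lemma bool_same : ∀ a b c : Bool, a ≠ c → b ≠ c → a = b := by decide

lemma bool_ne : ∀ a b : Bool, a ≠ b → a = !b := by decide

/-- In a finite setting, the lca cluster is itself a cluster containing both points. -/
lemma lca_spec [Fintype V] (T : PhyloTree V) (x y : V) :
    T.lcaSet x y ∈ T.clusters ∧ x ∈ T.lcaSet x y ∧ y ∈ T.lcaSet x y := by
  classical
  set S : Set (Set V) := {p : Set V | p ∈ T.clusters ∧ x ∈ p ∧ y ∈ p} with hS
  have hne : S.Nonempty := ⟨Set.univ, T.univ_mem, trivial, trivial⟩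
  obtain ⟨m, hmS, hmin⟩ := Set.Finite.exists_minimalFor id S (Set.toFinite S) hne
  have hml : ∀ p ∈ S, m ⊆ p := by
    intro p hp
    rcases T.compat m hmS.1 p hp.1 with h | h | h
    · exact h
    · exact (hmin hp h)
    · exact absurd (h ▸ (⟨hmS.2.1, hp.2.1⟩ : x ∈ m ∩ p)) (Set.notMem_empty x)
  have heq : T.lcaSet x y = m :=
    subset_antisymm (Set.sInter_subset_of_mem hmS) (Set.subset_sInter hml)
  rw [heq]; exact ⟨hmS.1, hmS.2.1, hmS.2.2⟩

/-- Out-neighbourhood. -/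
def NbrOut (G : V → V → Prop) (x : V) : Set V := {y | G x y}

/-- In-neighbourhood. -/
def NbrIn (G : V → V → Prop) (x : V) : Set V := {z | G z x}

/-- The candidate cluster of `x` in the constructed tree. -/
def Rcl (G : V → V → Prop) (x : V) : Set V :=
  NbrOut G x ∪
    {u | NbrOut G u ⊂ NbrOut G x ∨ (NbrOut G u = NbrOut G x ∧ NbrIn G x ⊆ NbrIn G u)}

lemma mem_Rcl_self (G : V → V → Prop) (x : V) : x ∈ Rcl G x :=
  Or.inr (Or.inr ⟨rfl, subset_rfl⟩)

end AuxBMG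

section AuxBMG2
variable {V : Type}

lemma mem_NbrOut {G : V → V → Prop} {x y : V} : y ∈ NbrOut G x ↔ G x y := Iff.rfl

lemma mem_NbrIn {G : V → V → Prop} {x z : V} : z ∈ NbrIn G x ↔ G z x := Iff.rfl

lemma mem_Rcl {G : V → V → Prop} {x u : V} :
    u ∈ Rcl G x ↔ G x u ∨
      (NbrOut G u ⊂ NbrOut G x ∨ (NbrOut G u = NbrOut G x ∧ NbrIn G x ⊆ NbrIn G u)) :=
  Iff.rfl

end AuxBMG2
/-- A properly 2-colored digraph is a BMG iff it is sink-free
and contains no induced F1-, F2-, or F3-graph. -/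
theorem twoBMG_characterization [Fintype V] (G : V → V → Prop) (σ : V → Bool)
    (hproper : ∀ x y : V, G x y → σ x ≠ σ y)
    (hsurj : Function.Surjective σ) :
    IsBMG G σ ↔
      ((∀ x : V, ∃ y : V, G x y) ∧ ¬ HasF1 G σ ∧ ¬ HasF2 G σ ∧ ¬ HasF3 G σ) := by
  classical
  constructor
  · -- Forward direction: a BMG is sink-free and has no induced F1/F2/F3.
    rintro ⟨T, hT⟩
    -- sink-freeness
    have hsf : ∀ x : V, ∃ y, G x y := by
      intro x
      obtain ⟨v, hv⟩ := hsurj (!σ x)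
      set S : Set V := {y' | σ y' = !σ x} with hSdef
      obtain ⟨y0, hy0, hminS⟩ :=
        Set.Finite.exists_minimalFor (fun y' => T.lcaSet x y') S (Set.toFinite S) ⟨v, hv⟩
      have hy0c : σ y0 = !σ x := hy0
      refine ⟨y0, (hT x y0).2 ⟨by simp [hy0c], ?_⟩⟩
      intro y' hy'
      have hy'S : y' ∈ S := by
        show σ y' = !σ x
        rw [hy', hy0c]
      have c1 := lca_spec T x y0
      have c2 := lca_spec T x y'
      rcases T.compat _ c2.1 _ c1.1 with h | h | h
      · exact (hminS hy'S h)
      · exact h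
      · exact absurd (h ▸ (⟨c2.2.1, c1.2.1⟩ : x ∈ T.lcaSet x y' ∩ T.lcaSet x y0))
          (Set.notMem_empty x)
    choose b hb using hsf
    -- the minimal cluster of x containing a vertex of the opposite color
    set m : V → Set V := fun x => T.lcaSet x (b x) with hmdef
    have hmcl : ∀ x, m x ∈ T.clusters ∧ x ∈ m x ∧ b x ∈ m x := fun x => lca_spec T x (b x)
    have hbx : ∀ x, σ (b x) = !σ x := fun x => bool_ne _ _ (Ne.symm (hproper x (b x) (hb x)))
    have hGm : ∀ x y, σ y ≠ σ x → (G x y ↔ y ∈ m x) := by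
      intro x y hσ
      constructor
      · intro h
        have hbm := (hT x y).1 h
        have h2 := hbm.2 (b x) (by rw [hbx x, bool_ne _ _ hσ])
        exact h2 (lca_spec T x y).2.2
      · intro hy
        apply (hT x y).2
        refine ⟨Ne.symm hσ, ?_⟩
        intro y'' hy''
        have h1 : T.lcaSet x y ⊆ m x :=
          Set.sInter_subset_of_mem ⟨(hmcl x).1, (hmcl x).2.1, hy⟩
        have h2 : m x ⊆ T.lcaSet x y'' :=
          ((hT x (b x)).1 (hb x)).2 y'' (by rw [hy'', bool_ne _ _ hσ, hbx x])
        exact h1.trans h2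
    have hmx : ∀ x u, u ∈ m x → m u ⊆ m x := by
      intro x u hu
      by_cases hc : σ u = σ x
      · have h2 : m u ⊆ T.lcaSet u (b x) :=
          ((hT u (b u)).1 (hb u)).2 (b x) (by rw [hbx x, hbx u, hc])
        have h3 : T.lcaSet u (b x) ⊆ m x :=
          Set.sInter_subset_of_mem ⟨(hmcl x).1, hu, (hmcl x).2.2⟩
        exact h2.trans h3
      · have h2 : m u ⊆ T.lcaSet u x :=
          ((hT u (b u)).1 (hb u)).2 x (by rw [hbx u, bool_ne _ _ (fun h => hc h.symm)])
        have h3 : T.lcaSet u x ⊆ m x :=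
          Set.sInter_subset_of_mem ⟨(hmcl x).1, hu, (hmcl x).2.1⟩
        exact h2.trans h3
    have hcomp : ∀ x z, (m x ∩ m z).Nonempty → m x ⊆ m z ∨ m z ⊆ m x := by
      intro x z ⟨w, hwx, hwz⟩
      rcases T.compat _ (hmcl x).1 _ (hmcl z).1 with h | h | h
      · exact Or.inl h
      · exact Or.inr h
      · exact absurd (h ▸ (⟨hwx, hwz⟩ : w ∈ m x ∩ m z)) (Set.notMem_empty w)
    refine ⟨fun x => ⟨b x, hb x⟩, ?_, ?_, ?_⟩
    · -- no F1
      rintro ⟨x1, x2, y1, y2, hx12, hy12, hcx, hcy, hcxy, -, -, -, -,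
        h11, h22, h12, hn12, hn21⟩
      have c2 : σ x2 ≠ σ y1 := by rw [← hcx]; exact hcxy
      have c3 : σ x2 ≠ σ y2 := by rw [← hcx, ← hcy]; exact hcxy
      have c5 : σ x1 ≠ σ y2 := by rw [← hcy]; exact hcxy
      have hy1m : y1 ∈ m x1 := (hGm x1 y1 (Ne.symm hcxy)).1 h11
      have hx2m1 : x2 ∈ m x1 := hmx x1 y1 hy1m ((hGm y1 x2 c2).1 h12)
      have hx2m2 : x2 ∈ m y2 := (hGm y2 x2 c3).1 h22
      rcases hcomp x1 y2 ⟨x2, hx2m1, hx2m2⟩ with h | h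
      · exact hn21 ((hGm y2 x1 c5).2 (h (hmcl x1).2.1))
      · exact hn12 ((hGm x1 y2 (Ne.symm c5)).2 (h (hmcl y2).2.1))
    · -- no F2
      rintro ⟨x1, x2, y1, y2, hx12, hy12, hcx, hcy, hcxy, -, -, -, -,
        h11, h12, h22, hn12⟩
      have c2 : σ x2 ≠ σ y1 := by rw [← hcx]; exact hcxy
      have c3 : σ x2 ≠ σ y2 := by rw [← hcx, ← hcy]; exact hcxy
      have c5 : σ x1 ≠ σ y2 := by rw [← hcy]; exact hcxy
      have hy1m : y1 ∈ m x1 := (hGm x1 y1 (Ne.symm hcxy)).1 h11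
      have hx2m : x2 ∈ m x1 := hmx x1 y1 hy1m ((hGm y1 x2 c2).1 h12)
      have hy2m : y2 ∈ m x1 := hmx x1 x2 hx2m ((hGm x2 y2 (Ne.symm c3)).1 h22)
      exact hn12 ((hGm x1 y2 (Ne.symm c5)).2 hy2m)
    · -- no F3
      rintro ⟨x1, x2, y1, y2, y3, hx12, hy12, hy13, hy23, hcx, hcy12, hcy23, hcxy,
        -, -, -, -, -, -, -, -, h11, h22, h13, h23, hn12, hn21⟩
      have c6 : σ x1 ≠ σ y3 := by rw [← hcy23, ← hcy12]; exact hcxy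
      have c7 : σ x2 ≠ σ y3 := by rw [← hcx]; exact c6
      have c8 : σ x2 ≠ σ y1 := by rw [← hcx]; exact hcxy
      have c9 : σ x1 ≠ σ y2 := by rw [← hcy12]; exact hcxy
      have c10 : σ x2 ≠ σ y2 := by rw [← hcx]; exact c9
      have hy3m1 : y3 ∈ m x1 := (hGm x1 y3 (Ne.symm c6)).1 h13
      have hy3m2 : y3 ∈ m x2 := (hGm x2 y3 (Ne.symm c7)).1 h23
      rcases hcomp x1 x2 ⟨y3, hy3m1, hy3m2⟩ with h | h
      · exact hn21 ((hGm x2 y1 (Ne.symm c8)).2 (h ((hGm x1 y1 (Ne.symm hcxy)).1 h11)))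
      · exact hn12 ((hGm x1 y2 (Ne.symm c9)).2 (h ((hGm x2 y2 (Ne.symm c10)).1 h22)))
  · -- Backward direction: construct an explaining tree.
    rintro ⟨hsf, hF1, hF2, hF3⟩
    obtain ⟨v0, -⟩ := hsurj true
    have nota : ∀ a c : V, σ a = σ c → ¬ G a c := fun a c h hg => hproper a c hg h
    -- rule extracted from the absence of F2
    have r2 : ∀ a b c d : V, G a b → G b c → G c d → G a d := by
      intro a b c d hab hbc hcd
      by_cases hac : a = c
      · subst hac; exact hcd
      by_cases hbd : b = d
      · subst hbd; exact hab
      by_contra had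
      have e1 : σ a = σ c := bool_same _ _ (σ b) (hproper a b hab) (Ne.symm (hproper b c hbc))
      have e2 : σ b = σ d := bool_same _ _ (σ c) (hproper b c hbc) (Ne.symm (hproper c d hcd))
      exact hF2 ⟨a, c, b, d, hac, hbd, e1, e2, hproper a b hab,
        nota a c e1, nota c a e1.symm, nota b d e2, nota d b e2.symm,
        hab, hbc, hcd, had⟩
    -- rule extracted from the absence of F1
    have r1 : ∀ x1 y1 x2 y2 : V, G x1 y1 → G y2 x2 → G y1 x2 → G x1 y2 ∨ G y2 x1 := by
      intro x1 y1 x2 y2 h1 h2 h3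
      by_cases h12 : x1 = x2
      · subst h12; exact Or.inr h2
      by_cases hy : y1 = y2
      · subst hy; exact Or.inl h1
      by_contra hcon
      push_neg at hcon
      have e1 : σ x1 = σ x2 :=
        bool_same _ _ (σ y1) (hproper x1 y1 h1) (Ne.symm (hproper y1 x2 h3))
      have e2 : σ y1 = σ y2 :=
        bool_same _ _ (σ x2) (hproper y1 x2 h3) (hproper y2 x2 h2)
      exact hF1 ⟨x1, x2, y1, y2, h12, hy, e1, e2, hproper x1 y1 h1,
        nota x1 x2 e1, nota x2 x1 e1.symm, nota y1 y2 e2, nota y2 y1 e2.symm,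
        h1, h2, h3, hcon.1, hcon.2⟩
    -- rule extracted from the absence of F3
    have r3 : ∀ x1 x2 y1 y2 y3 : V, G x1 y1 → G x2 y2 → G x1 y3 → G x2 y3 →
        G x1 y2 ∨ G x2 y1 := by
      intro x1 x2 y1 y2 y3 h1 h2 h3 h4
      by_cases hx : x1 = x2
      · subst hx; exact Or.inl h2
      by_cases h12 : y1 = y2
      · subst h12; exact Or.inl h1
      by_cases h13 : y1 = y3
      · subst h13; exact Or.inr h4
      by_cases h23 : y2 = y3
      · subst h23; exact Or.inl h3
      by_contra hcon
      push_neg at hcon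
      have e1 : σ x1 = σ x2 := bool_same _ _ (σ y3) (hproper x1 y3 h3) (hproper x2 y3 h4)
      have e3 : σ y2 = σ y3 :=
        bool_same _ _ (σ x2) (Ne.symm (hproper x2 y2 h2)) (Ne.symm (hproper x2 y3 h4))
      have e2 : σ y1 = σ y2 := bool_same _ _ (σ x1) (Ne.symm (hproper x1 y1 h1))
        (by rw [e3]; exact Ne.symm (hproper x1 y3 h3))
      exact hF3 ⟨x1, x2, y1, y2, y3, hx, h12, h13, h23, e1, e2, e3, hproper x1 y1 h1,
        nota x1 x2 e1, nota x2 x1 e1.symm,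
        nota y1 y2 e2, nota y2 y1 e2.symm,
        nota y1 y3 (e2.trans e3), nota y3 y1 (e2.trans e3).symm,
        nota y2 y3 e3, nota y3 y2 e3.symm,
        h1, h2, h3, h4, hcon.1, hcon.2⟩
    -- key lemmas
    have key1 : ∀ z x x' : V, G z x → NbrOut G x' ⊂ NbrOut G x → G z x' := by
      intro z x x' hzx hss
      obtain ⟨y', hy'⟩ := hsf x'
      have hxy' : G x y' := mem_NbrOut.1 (hss.subset (mem_NbrOut.2 hy'))
      obtain ⟨y, hyx, hyn⟩ := Set.exists_of_ssubset hss
      obtain ⟨a, ha⟩ := hsf y'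
      have hza : G z a := r2 z x y' a hzx hxy' ha
      rcases r1 x' y' a z hy' hza ha with h | h
      · exact absurd (mem_NbrOut.2 (r2 x' z x y h hzx (mem_NbrOut.1 hyx))) hyn
      · exact h
    have key2 : ∀ z w y x : V, G z w → G w y → G x y → G z x ∨ G x z :=
      fun z w y x h1 h2 h3 => r1 z w y x h1 h3 h2
    have key3 : ∀ x z : V, NbrOut G x = NbrOut G z →
        NbrIn G x ⊆ NbrIn G z ∨ NbrIn G z ⊆ NbrIn G x := by
      intro x z hN
      by_contra hcon
      push_neg at hcon
      obtain ⟨w1, hw1x, hw1z⟩ := Set.not_subset.1 hcon.1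
      obtain ⟨w2, hw2z, hw2x⟩ := Set.not_subset.1 hcon.2
      obtain ⟨y, hy⟩ := hsf x
      have hzy : G z y := mem_NbrOut.1 (hN ▸ (mem_NbrOut.2 hy))
      have hxw2 : G x w2 := by
        rcases r1 w2 z y x (mem_NbrIn.1 hw2z) hy hzy with h | h
        · exact absurd (mem_NbrIn.2 h) hw2x
        · exact h
      exact hw1z (mem_NbrIn.2 (r2 w1 x w2 z (mem_NbrIn.1 hw1x) hxw2 (mem_NbrIn.1 hw2z)))
    have key4 : ∀ x z y3 : V, G x y3 → G z y3 →
        NbrOut G x ⊆ NbrOut G z ∨ NbrOut G z ⊆ NbrOut G x := by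
      intro x z y3 h1 h2
      by_contra hcon
      push_neg at hcon
      obtain ⟨y1, hy1, hy1'⟩ := Set.not_subset.1 hcon.1
      obtain ⟨y2, hy2, hy2'⟩ := Set.not_subset.1 hcon.2
      rcases r3 x z y1 y2 y3 (mem_NbrOut.1 hy1) (mem_NbrOut.1 hy2) h1 h2 with h | h
      · exact hy2' (mem_NbrOut.2 h)
      · exact hy1' (mem_NbrOut.2 h)
    -- membership of opposite-colored vertices in Rcl is exactly adjacency
    have hRout : ∀ x y : V, σ y ≠ σ x → (y ∈ Rcl G x ↔ G x y) := by
      intro x y hσ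
      constructor
      · intro hm
        rcases mem_Rcl.1 hm with h | h
        · exact h
        · exfalso
          have hsub : NbrOut G y ⊆ NbrOut G x := by
            rcases h with h' | h'
            · exact h'.subset
            · exact h'.1.le
          obtain ⟨w, hw⟩ := hsf y
          have hxw : G x w := mem_NbrOut.1 (hsub (mem_NbrOut.2 hw))
          exact hσ (bool_same _ _ (σ w) (hproper y w hw) (hproper x w hxw))
      · exact fun h => mem_Rcl.2 (Or.inl h)
    -- minimality: if x lies in the cluster of z then its cluster is contained in it
    have hmin : ∀ z x : V, x ∈ Rcl G z → Rcl G x ⊆ Rcl G z := by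
      intro z x hx
      rcases mem_Rcl.1 hx with hzx | hcond
      · intro u hu
        rcases mem_Rcl.1 hu with hxu | hcond'
        · refine mem_Rcl.2 (Or.inr ?_)
          have hsub : NbrOut G u ⊆ NbrOut G z := fun w hw =>
            mem_NbrOut.2 (r2 z x u w hzx hxu (mem_NbrOut.1 hw))
          by_cases hzs : NbrOut G z ⊆ NbrOut G u
          · exact Or.inr ⟨subset_antisymm hsub hzs, fun w hw =>
              mem_NbrIn.2 (r2 w z x u (mem_NbrIn.1 hw) hzx hxu)⟩
          · exact Or.inl (lt_of_le_not_ge hsub hzs)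
        · rcases hcond' with hss | ⟨heq, hIn⟩
          · exact mem_Rcl.2 (Or.inl (key1 z x u hzx hss))
          · exact mem_Rcl.2 (Or.inl (mem_NbrIn.1 (hIn (mem_NbrIn.2 hzx))))
      · rcases hcond with hss | ⟨heq, hIn⟩
        · intro u hu
          rcases mem_Rcl.1 hu with hxu | hcond'
          · exact mem_Rcl.2 (Or.inl (mem_NbrOut.1 (hss.subset (mem_NbrOut.2 hxu))))
          · refine mem_Rcl.2 (Or.inr (Or.inl ?_))
            have hle : NbrOut G u ⊆ NbrOut G x := by
              rcases hcond' with h | h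
              · exact h.subset
              · exact h.1.le
            exact lt_of_le_of_lt hle hss
        · intro u hu
          rcases mem_Rcl.1 hu with hxu | hcond'
          · exact mem_Rcl.2 (Or.inl (mem_NbrOut.1 (heq ▸ (mem_NbrOut.2 hxu))))
          · rcases hcond' with h | h
            · exact mem_Rcl.2 (Or.inr (Or.inl (heq ▸ h)))
            · exact mem_Rcl.2 (Or.inr (Or.inr ⟨h.1.trans heq, hIn.trans h.2⟩))
    -- two clusters sharing a common out-neighbor are comparable at the root vertices
    have hsame : ∀ x z y : V, G x y → G z y → x ∈ Rcl G z ∨ z ∈ Rcl G x := by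
      intro x z y h1 h2
      rcases key4 x z y h1 h2 with h | h
      · by_cases hzs : NbrOut G z ⊆ NbrOut G x
        · have heq := subset_antisymm h hzs
          rcases key3 x z heq with hI | hI
          · exact Or.inr (mem_Rcl.2 (Or.inr (Or.inr ⟨heq.symm, hI⟩)))
          · exact Or.inl (mem_Rcl.2 (Or.inr (Or.inr ⟨heq, hI⟩)))
        · exact Or.inl (mem_Rcl.2 (Or.inr (Or.inl (lt_of_le_not_ge h hzs))))
      · by_cases hxs : NbrOut G x ⊆ NbrOut G z
        · have heq := subset_antisymm hxs h
          rcases key3 x z heq with hI | hI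
          · exact Or.inr (mem_Rcl.2 (Or.inr (Or.inr ⟨heq.symm, hI⟩)))
          · exact Or.inl (mem_Rcl.2 (Or.inr (Or.inr ⟨heq, hI⟩)))
        · exact Or.inr (mem_Rcl.2 (Or.inr (Or.inl (lt_of_le_not_ge h hxs))))
    -- laminarity
    have hcomp : ∀ x z : V, (Rcl G x ∩ Rcl G z).Nonempty →
        Rcl G x ⊆ Rcl G z ∨ Rcl G z ⊆ Rcl G x := by
      rintro x z ⟨w, hwx, hwz⟩
      suffices h : x ∈ Rcl G z ∨ z ∈ Rcl G x by
        rcases h with h | h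
        · exact Or.inl (hmin z x h)
        · exact Or.inr (hmin x z h)
      rcases mem_Rcl.1 hwx with h1 | h1 <;> rcases mem_Rcl.1 hwz with h2 | h2
      · exact hsame x z w h1 h2
      · have hwz' : NbrOut G w ⊆ NbrOut G z := by
          rcases h2 with h | h
          · exact h.subset
          · exact h.1.le
        obtain ⟨y, hy⟩ := hsf w
        rcases key2 x w y z h1 hy (mem_NbrOut.1 (hwz' (mem_NbrOut.2 hy))) with h | h
        · exact Or.inr (mem_Rcl.2 (Or.inl h))
        · exact Or.inl (mem_Rcl.2 (Or.inl h))
      · have hwx' : NbrOut G w ⊆ NbrOut G x := by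
          rcases h1 with h | h
          · exact h.subset
          · exact h.1.le
        obtain ⟨y, hy⟩ := hsf w
        rcases key2 z w y x h2 hy (mem_NbrOut.1 (hwx' (mem_NbrOut.2 hy))) with h | h
        · exact Or.inl (mem_Rcl.2 (Or.inl h))
        · exact Or.inr (mem_Rcl.2 (Or.inl h))
      · have hwx' : NbrOut G w ⊆ NbrOut G x := by
          rcases h1 with h | h
          · exact h.subset
          · exact h.1.le
        have hwz' : NbrOut G w ⊆ NbrOut G z := by
          rcases h2 with h | h
          · exact h.subset
          · exact h.1.le
        obtain ⟨y, hy⟩ := hsf w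
        exact hsame x z y (mem_NbrOut.1 (hwx' (mem_NbrOut.2 hy)))
          (mem_NbrOut.1 (hwz' (mem_NbrOut.2 hy)))
    -- assemble the tree
    refine ⟨⟨{p | p = Set.univ ∨ (∃ v, p = {v}) ∨ ∃ x, p = Rcl G x}, ?_, ?_, ?_, ?_⟩, ?_⟩
    · rintro p hp q hq
      rcases hq with rfl | ⟨w, rfl⟩ | ⟨z, rfl⟩
      · exact Or.inl (Set.subset_univ p)
      · by_cases hw : w ∈ p
        · exact Or.inr (Or.inl (Set.singleton_subset_iff.2 hw))
        · exact Or.inr (Or.inr (by rw [Set.inter_singleton_eq_empty]; exact hw))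
      · rcases hp with rfl | ⟨v, rfl⟩ | ⟨x, rfl⟩
        · exact Or.inr (Or.inl (Set.subset_univ _))
        · by_cases hv : v ∈ Rcl G z
          · exact Or.inl (Set.singleton_subset_iff.2 hv)
          · exact Or.inr (Or.inr (by rw [Set.singleton_inter_eq_empty]; exact hv))
        · by_cases hne : (Rcl G x ∩ Rcl G z).Nonempty
          · rcases hcomp x z hne with h | h
            · exact Or.inl h
            · exact Or.inr (Or.inl h)
          · exact Or.inr (Or.inr (Set.not_nonempty_iff_eq_empty.1 hne))
    · exact fun v => Or.inr (Or.inl ⟨v, rfl⟩)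
    · exact Or.inl rfl
    · rintro p (rfl | ⟨v, rfl⟩ | ⟨x, rfl⟩)
      · exact ⟨v0, trivial⟩
      · exact ⟨v, rfl⟩
      · exact ⟨x, mem_Rcl_self G x⟩
    · -- the tree explains (G, σ)
      intro x y
      constructor
      · intro hG
        have hσ : σ x ≠ σ y := hproper x y hG
        refine ⟨hσ, ?_⟩
        intro y' hy'
        have hmem1 : Rcl G x ∈ {p : Set V | p ∈ ({p | p = Set.univ ∨ (∃ v, p = {v}) ∨
            ∃ x, p = Rcl G x} : Set (Set V)) ∧ x ∈ p ∧ y ∈ p} :=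
          ⟨Or.inr (Or.inr ⟨x, rfl⟩), mem_Rcl_self G x, mem_Rcl.2 (Or.inl hG)⟩
        refine (Set.sInter_subset_of_mem hmem1).trans (Set.subset_sInter ?_)
        rintro p ⟨hp, hxp, hy'p⟩
        rcases hp with rfl | ⟨v, rfl⟩ | ⟨z, rfl⟩
        · exact Set.subset_univ _
        · exfalso
          have hxv : x = v := hxp
          have hyv : y' = v := hy'p
          exact hσ (by rw [hxv, ← hyv, hy'])
        · exact hmin z x hxp
      · rintro ⟨hσ, hbm⟩
        obtain ⟨y0, hy0⟩ := hsf x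
        have hσ0 : σ y0 = σ y :=
          bool_same _ _ (σ x) (Ne.symm (hproper x y0 hy0)) (Ne.symm hσ)
        have h1 : y ∈ ⋂₀ {p : Set V | p ∈ ({p | p = Set.univ ∨ (∃ v, p = {v}) ∨
            ∃ x, p = Rcl G x} : Set (Set V)) ∧ x ∈ p ∧ y ∈ p} :=
          Set.mem_sInter.2 (fun p hp => hp.2.2)
        have h2 := hbm y0 hσ0
        have h3 : (⋂₀ {p : Set V | p ∈ ({p | p = Set.univ ∨ (∃ v, p = {v}) ∨
            ∃ x, p = Rcl G x} : Set (Set V)) ∧ x ∈ p ∧ y0 ∈ p}) ⊆ Rcl G x :=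
          Set.sInter_subset_of_mem
            ⟨Or.inr (Or.inr ⟨x, rfl⟩), mem_Rcl_self G x, mem_Rcl.2 (Or.inl hy0)⟩
        exact (hRout x y (Ne.symm hσ)).1 (h3 (h2 h1))
end
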